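/- Let −1 < d < 0 and let p be a probability vector on n ≥ 2 symbols with p_1 = max_i p_i ≥ 0.4. Then there exists a codeword-length vector l attaining the optimal exponential redundancy R^d_opt(p) with l_1 = 1. -/

import Mathlib

open Real Finset

/-- A valid codeword-length vector: all lengths at least 1 and the Kraft inequality holds. -/
def IsCode (n : ℕ) (l : Fin n → ℕ) : Prop :=
  (∀ i, 1 ≤ l i) ∧ ∑ i, (2 : ℝ) ^ (-(l i : ℝ)) ≤ 1

/-- Exponential redundancy `R^d(p,l)`. -/
noncomputable def expRedundancy (n : ℕ) (d : ℝ) (p : Fin n → ℝ) (l : Fin n → ℕ) : ℝ :=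
  (1 / d) * Real.logb 2 (∑ i, (p i) ^ (1 + d) * (2 : ℝ) ^ (d * (l i : ℝ)))

/-- Optimal exponential redundancy `R^d_opt(p)`. -/
noncomputable def expRedundancyOpt (n : ℕ) (d : ℝ) (p : Fin n → ℝ) : ℝ :=
  sInf { r | ∃ l : Fin n → ℕ, IsCode n l ∧ r = expRedundancy n d p l }

set_option linter.unusedVariables false


lemma sum_range_two_pow (m : ℕ) : ∑ k ∈ Finset.range m, 2^k = 2^m - 1 := by
  induction m with
  | zero => simp
  | succ m ih => rw [Finset.sum_range_succ, ih]; have := Nat.one_le_two_pow (n := m); omega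

lemma pc : ∀ (c : ℕ) (M : Multiset ℕ) (L : ℕ), M.card = c →
    (M.map (fun a => 2^a)).sum = 2^L → ∀ a ∈ M, L + 1 ≤ a + c := by
  intro c
  induction c using Nat.strong_induction_on with
  | _ c ih =>
  intro M L hcard hsum a ha
  by_cases hnd : M.Nodup
  · -- Nodup case
    have hMdedup : M.toFinset.val = M := by
      simp [Multiset.toFinset, Multiset.dedup_eq_self.mpr hnd]
    have hsumT : ∑ b ∈ M.toFinset, 2^b = 2^L := by
      rw [Finset.sum]; rw [hMdedup]; exact hsum
    have haT : a ∈ M.toFinset := by simpa using ha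
    have hne : M.toFinset.Nonempty := ⟨a, haT⟩
    set Amax := M.toFinset.max' hne with hA
    have hmem : Amax ∈ M.toFinset := Finset.max'_mem _ _
    have hle : ∀ b ∈ M.toFinset, b ≤ Amax := fun b hb => Finset.le_max' _ _ hb
    -- Amax ≤ L
    have h1 : 2^Amax ≤ 2^L := hsumT ▸ Finset.single_le_sum (fun b _ => Nat.zero_le _) hmem
    have hAL : Amax ≤ L := (Nat.pow_le_pow_iff_right (by norm_num)).mp h1
    -- L ≤ Amax
    have hsub : M.toFinset ⊆ Finset.range (Amax + 1) := fun b hb =>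
      Finset.mem_range.mpr (Nat.lt_succ_of_le (hle b hb))
    have h2 : 2^L ≤ 2^(Amax+1) - 1 := by
      rw [← hsumT, ← sum_range_two_pow]
      exact Finset.sum_le_sum_of_subset hsub
    have hLA : L ≤ Amax := by
      have := Nat.one_le_two_pow (n := Amax + 1)
      have h3 : 2^L < 2^(Amax+1) := by omega
      have := (Nat.pow_lt_pow_iff_right (a := 2) (by norm_num)).mp h3
      omega
    have hLAeq : L = Amax := le_antisymm hLA hAL
    -- card cases
    have hc1 : c = 1 := by
      by_contra hc
      have hc2 : 2 ≤ c := by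
        have : 0 < Multiset.card M := Multiset.card_pos_iff_exists_mem.mpr ⟨a, ha⟩
        omega
      have hcT : M.toFinset.card = c := by
        rw [Multiset.toFinset_card_of_nodup hnd, hcard]
      obtain ⟨b, hb, hbne⟩ : ∃ b ∈ M.toFinset, b ≠ Amax := by
        by_contra hall
        push_neg at hall
        have : M.toFinset ⊆ {Amax} := fun x hx => Finset.mem_singleton.mpr (hall x hx)
        have := Finset.card_le_card this
        simp [hcT] at this; omega
      have hbmem : b ∈ M.toFinset.erase Amax := Finset.mem_erase.mpr ⟨hbne, hb⟩
      have : 2^Amax + 2^b ≤ ∑ x ∈ M.toFinset, 2^x := by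
        rw [← Finset.add_sum_erase _ _ hmem]
        have : 2^b ≤ ∑ x ∈ M.toFinset.erase Amax, 2^x :=
          Finset.single_le_sum (fun x _ => Nat.zero_le _) hbmem
        omega
      rw [hsumT, hLAeq] at this
      have := Nat.one_le_two_pow (n := b)
      omega
    -- c = 1 : M = {a}, a = Amax = L
    have : a = Amax := by
      have hcT : M.toFinset.card = 1 := by
        rw [Multiset.toFinset_card_of_nodup hnd, hcard, hc1]
      obtain ⟨x, hx⟩ := Finset.card_eq_one.mp hcT
      rw [hx] at haT hmem
      simp at haT hmem; omega
    omega
  · -- duplicate exists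
    rw [Multiset.nodup_iff_count_le_one] at hnd
    push_neg at hnd
    obtain ⟨k, hk⟩ := hnd
    have hkM : k ∈ M := Multiset.count_pos.mp (by omega)
    have hkM2 : k ∈ M.erase k := by
      rw [← Multiset.count_pos, Multiset.count_erase_self]; omega
    have hc2 : 2 ≤ c := by
      have := Multiset.count_le_card k M
      omega
    set M₂ : Multiset ℕ := (k+1) ::ₘ ((M.erase k).erase k) with hM₂
    have hcard2 : M₂.card = c - 1 := by
      rw [hM₂, Multiset.card_cons, Multiset.card_erase_of_mem hkM2,
        Multiset.card_erase_of_mem hkM, hcard]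
      simp only [Nat.pred_eq_sub_one]
      omega
    have hMeq : M = k ::ₘ k ::ₘ ((M.erase k).erase k) := by
      rw [Multiset.cons_erase hkM2, Multiset.cons_erase hkM]
    have hsum2 : (M₂.map (fun a => 2^a)).sum = 2^L := by
      rw [hM₂, Multiset.map_cons, Multiset.sum_cons]
      rw [hMeq] at hsum
      simp only [Multiset.map_cons, Multiset.sum_cons] at hsum
      rw [pow_succ]
      omega
    have ihM := ih (c-1) (by omega) M₂ L hcard2 hsum2
    by_cases hak : a = k
    · have := ihM (k+1) (by rw [hM₂]; exact Multiset.mem_cons_self _ _)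
      omega
    · have haM2 : a ∈ M₂ := by
        rw [hM₂]
        apply Multiset.mem_cons_of_mem
        rwa [Multiset.mem_erase_of_ne hak, Multiset.mem_erase_of_ne hak]
      have := ihM a haM2
      omega

lemma dyadic_cast (n : ℕ) (l : Fin n → ℕ) (B : ℕ) (hB : ∀ i, l i ≤ B) :
    ((∑ i, 2^(B - l i) : ℕ) : ℝ) = (2:ℝ)^(B:ℝ) * ∑ i, (2:ℝ)^(-(l i : ℝ)) := by
  push_cast
  rw [Finset.mul_sum]
  refine Finset.sum_congr rfl fun i _ => ?_
  rw [← Real.rpow_natCast (2:ℝ) (B - l i), Nat.cast_sub (hB i), sub_eq_add_neg,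
    Real.rpow_add (by norm_num)]

lemma kraft_eq_one_bound (n : ℕ) (l : Fin n → ℕ) (hn : 0 < n)
    (h : ∑ i, (2:ℝ)^(-(l i : ℝ)) = 1) : ∀ i, l i + 1 ≤ n := by
  have hne : (Finset.univ : Finset (Fin n)).Nonempty := ⟨⟨0, hn⟩, Finset.mem_univ _⟩
  obtain ⟨j, -, hj⟩ := Finset.exists_max_image Finset.univ l hne
  set B := l j with hBdef
  have hB : ∀ i, l i ≤ B := fun i => hj i (Finset.mem_univ i)
  have hcast := dyadic_cast n l B hB
  rw [h, mul_one] at hcast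
  have hN : (∑ i, 2^(B - l i) : ℕ) = 2^B := by
    have h2 : ((∑ i, 2^(B - l i) : ℕ) : ℝ) = ((2^B : ℕ) : ℝ) := by
      rw [hcast]; push_cast; rw [Real.rpow_natCast]
    exact_mod_cast h2
  intro i
  have hcard : (Multiset.map (fun i => B - l i) Finset.univ.val).card = n := by
    simp
  have hsum : ((Multiset.map (fun i => B - l i) Finset.univ.val).map (fun a => 2^a)).sum
      = 2^B := by
    rw [Multiset.map_map]
    exact hN
  have hmem : B - l i ∈ Multiset.map (fun i => B - l i) Finset.univ.val :=
    Multiset.mem_map_of_mem _ (Finset.mem_univ i)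
  have := pc n _ B hcard hsum (B - l i) hmem
  have := hB i
  omega

lemma kraft_lt_one_slack (n : ℕ) (l : Fin n → ℕ) (hn : 0 < n)
    (h : ∑ i, (2:ℝ)^(-(l i : ℝ)) < 1) :
    ∃ j, (∀ i, l i ≤ l j) ∧ (∑ i, (2:ℝ)^(-(l i : ℝ))) + (2:ℝ)^(-(l j : ℝ)) ≤ 1 := by
  have hne : (Finset.univ : Finset (Fin n)).Nonempty := ⟨⟨0, hn⟩, Finset.mem_univ _⟩
  obtain ⟨j, -, hj⟩ := Finset.exists_max_image Finset.univ l hne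
  refine ⟨j, fun i => hj i (Finset.mem_univ i), ?_⟩
  set B := l j with hBdef
  have hB : ∀ i, l i ≤ B := fun i => hj i (Finset.mem_univ i)
  have hcast := dyadic_cast n l B hB
  set K := ∑ i, (2:ℝ)^(-(l i : ℝ)) with hK
  set N : ℕ := ∑ i, 2^(B - l i) with hNdef
  have h2B : (0:ℝ) < (2:ℝ)^(B:ℝ) := Real.rpow_pos_of_pos (by norm_num) _
  have hNlt : N < 2^B := by
    have h2 : ((N:ℕ):ℝ) < ((2^B : ℕ):ℝ) := by
      rw [hcast]
      push_cast
      rw [Real.rpow_natCast] at h2B ⊢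
      nlinarith
    exact_mod_cast h2
  have hN1 : ((N:ℝ) + 1) ≤ (2:ℝ)^(B:ℝ) := by
    have : (N + 1 : ℕ) ≤ 2^B := hNlt
    have h2 : ((N + 1 : ℕ):ℝ) ≤ ((2^B : ℕ):ℝ) := by exact_mod_cast this
    push_cast at h2
    rwa [Real.rpow_natCast]
  have hKval : K = (N:ℝ) * ((2:ℝ)^(B:ℝ))⁻¹ := by
    rw [hcast]; field_simp
  have hneg : (2:ℝ)^(-(B:ℝ)) = ((2:ℝ)^(B:ℝ))⁻¹ := Real.rpow_neg (by norm_num) _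
  rw [hKval, hneg]
  calc (N:ℝ) * ((2:ℝ)^(B:ℝ))⁻¹ + ((2:ℝ)^(B:ℝ))⁻¹
      = ((N:ℝ) + 1) * ((2:ℝ)^(B:ℝ))⁻¹ := by ring
    _ ≤ (2:ℝ)^(B:ℝ) * ((2:ℝ)^(B:ℝ))⁻¹ := by
        apply mul_le_mul_of_nonneg_right hN1 (by positivity)
    _ = 1 := by field_simp


lemma half_split (m : ℕ) :
    (2:ℝ)^(-((m+1:ℕ):ℝ)) + (2:ℝ)^(-((m+1:ℕ):ℝ)) = (2:ℝ)^(-(m:ℝ)) := by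
  push_cast
  have h : -((m:ℝ)+1) = (-(m:ℝ)) + (-1) := by ring
  rw [h, Real.rpow_add (by norm_num : (0:ℝ) < 2), Real.rpow_neg_one]
  ring

lemma rpow_neg_anti (u v : ℕ) (h : u ≤ v) : (2:ℝ)^(-(v:ℝ)) ≤ (2:ℝ)^(-(u:ℝ)) :=
  Real.rpow_le_rpow_of_exponent_le (by norm_num) (by exact_mod_cast neg_le_neg (by exact_mod_cast h))

lemma extract {ι : Type*} [DecidableEq ι] :
    ∀ (k : ℕ) (m : ℕ) (s : Finset ι) (l : ι → ℕ),
    (∀ i ∈ s, m ≤ l i) → (∀ i ∈ s, l i ≤ m + k) →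
    (2:ℝ)^(-(m:ℝ)) ≤ ∑ i ∈ s, (2:ℝ)^(-(l i : ℝ)) →
    ∃ w ⊆ s, ∑ i ∈ w, (2:ℝ)^(-(l i:ℝ)) = (2:ℝ)^(-(m:ℝ)) := by
  intro k
  induction k with
  | zero =>
    intro m s l hlo hhi hsum
    have hne : s.Nonempty := by
      rcases s.eq_empty_or_nonempty with rfl | h
      · simp at hsum
        have : (0:ℝ) < (2:ℝ)^(-(m:ℝ)) := Real.rpow_pos_of_pos (by norm_num) _
        linarith [pow_pos (two_pos (α := ℝ)) m]
      · exact h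
    obtain ⟨i, hi⟩ := hne
    refine ⟨{i}, Finset.singleton_subset_iff.mpr hi, ?_⟩
    rw [Finset.sum_singleton]
    have : l i = m := le_antisymm (by simpa using hhi i hi) (hlo i hi)
    rw [this]
  | succ k ih =>
    intro m s l hlo hhi hsum
    by_cases hex : ∃ i ∈ s, l i = m
    · obtain ⟨i, hi, hieq⟩ := hex
      refine ⟨{i}, Finset.singleton_subset_iff.mpr hi, ?_⟩
      rw [Finset.sum_singleton, hieq]
    · push_neg at hex
      have hlo' : ∀ i ∈ s, m + 1 ≤ l i := fun i hi =>
        lt_of_le_of_ne (hlo i hi) (fun h => hex i hi h.symm)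
      have hhalf := half_split m
      have hmono : (2:ℝ)^(-((m+1:ℕ):ℝ)) ≤ (2:ℝ)^(-(m:ℝ)) := rpow_neg_anti m (m+1) (by omega)
      obtain ⟨w1, hw1s, hw1⟩ := ih (m+1) s l hlo' (fun i hi => by have := hhi i hi; omega)
        (le_trans hmono hsum)
      have hsdiff : ∑ i ∈ s \ w1, (2:ℝ)^(-(l i:ℝ)) =
          (∑ i ∈ s, (2:ℝ)^(-(l i:ℝ))) - ∑ i ∈ w1, (2:ℝ)^(-(l i:ℝ)) :=
        Finset.sum_sdiff_eq_sub hw1s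
      obtain ⟨w2, hw2s, hw2⟩ := ih (m+1) (s \ w1) l
        (fun i hi => hlo' i (Finset.mem_sdiff.mp hi).1)
        (fun i hi => by have := hhi i (Finset.mem_sdiff.mp hi).1; omega)
        (by rw [hsdiff, hw1]; linarith)
      have hdisj : Disjoint w1 w2 :=
        Finset.disjoint_left.mpr fun x hx1 hx2 => ((Finset.mem_sdiff.mp (hw2s hx2)).2 hx1)
      refine ⟨w1 ∪ w2, Finset.union_subset hw1s (hw2s.trans (Finset.sdiff_subset)), ?_⟩
      rw [Finset.sum_union hdisj, hw1, hw2, hhalf]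

lemma holder {ι : Type*} (s : Finset ι) (q t : ι → ℝ) (hq : ∀ i ∈ s, 0 < q i)
    (ht : ∀ i ∈ s, 0 < t i) (a b : ℝ) (ha : 0 < a) (hb : 0 < b) (hab : b + a = 1) :
    ∑ i ∈ s, q i ^ b * t i ^ a ≤ (∑ i ∈ s, q i) ^ b * (∑ i ∈ s, t i) ^ a := by
  rcases s.eq_empty_or_nonempty with rfl | hne
  · simp [Real.zero_rpow (ne_of_gt ha), Real.zero_rpow (ne_of_gt hb)]
  · set Q := ∑ i ∈ s, q i with hQdef
    set T := ∑ i ∈ s, t i with hTdef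
    have hQ0 : 0 < Q := Finset.sum_pos hq hne
    have hT0 : 0 < T := Finset.sum_pos ht hne
    have key : ∀ i ∈ s, q i ^ b * t i ^ a ≤ (b * (q i / Q) + a * (t i / T)) * (Q ^ b * T ^ a) := by
      intro i hi
      have h1 : (q i / Q) ^ b * (t i / T) ^ a ≤ b * (q i / Q) + a * (t i / T) :=
        Real.geom_mean_le_arith_mean2_weighted hb.le ha.le (div_nonneg (hq i hi).le hQ0.le) (div_nonneg (ht i hi).le hT0.le) hab
      have h2 : (q i / Q) ^ b * (t i / T) ^ a = q i ^ b * t i ^ a / (Q ^ b * T ^ a) := by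
        rw [Real.div_rpow (hq i hi).le hQ0.le, Real.div_rpow (ht i hi).le hT0.le]
        ring
      rw [h2] at h1
      have hpos : (0:ℝ) < Q ^ b * T ^ a := by positivity
      calc q i ^ b * t i ^ a = (q i ^ b * t i ^ a / (Q^b*T^a)) * (Q^b*T^a) := by field_simp
        _ ≤ _ := mul_le_mul_of_nonneg_right h1 hpos.le
    calc ∑ i ∈ s, q i ^ b * t i ^ a
        ≤ ∑ i ∈ s, (b * (q i / Q) + a * (t i / T)) * (Q^b*T^a) := Finset.sum_le_sum key
      _ = (b * (Q/Q) + a * (T/T)) * (Q^b*T^a) := by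
          rw [← Finset.sum_mul]
          congr 1
          rw [Finset.sum_add_distrib, ← Finset.mul_sum, ← Finset.mul_sum,
            ← Finset.sum_div, ← Finset.sum_div]
      _ = Q^b*T^a := by
          rw [div_self hQ0.ne', div_self hT0.ne', mul_one, mul_one, hab, one_mul]

noncomputable def Fv (n : ℕ) (d : ℝ) (p : Fin n → ℝ) (l : Fin n → ℕ) : ℝ :=
  ∑ i, (p i) ^ (1 + d) * (2 : ℝ) ^ (d * (l i : ℝ))

lemma Fv_term_pos {n : ℕ} {d : ℝ} {p : Fin n → ℝ} (hp : ∀ i, 0 < p i) (l : Fin n → ℕ)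
    (i : Fin n) : 0 < (p i) ^ (1 + d) * (2 : ℝ) ^ (d * (l i : ℝ)) :=
  mul_pos (Real.rpow_pos_of_pos (hp i) _) (Real.rpow_pos_of_pos (by norm_num) _)

lemma Fv_pos {n : ℕ} (hn : 0 < n) {d : ℝ} {p : Fin n → ℝ} (hp : ∀ i, 0 < p i)
    (l : Fin n → ℕ) : 0 < Fv n d p l :=
  Finset.sum_pos (fun i _ => Fv_term_pos hp l i) ⟨⟨0, hn⟩, Finset.mem_univ _⟩

lemma X_anti {d : ℝ} (hd0 : d < 0) {u v : ℕ} (h : u ≤ v) :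
    (2:ℝ) ^ (d * (v:ℝ)) ≤ (2:ℝ) ^ (d * (u:ℝ)) := by
  apply Real.rpow_le_rpow_of_exponent_le (by norm_num)
  have : (u:ℝ) ≤ (v:ℝ) := by exact_mod_cast h
  nlinarith

lemma Fv_mono {n : ℕ} {d : ℝ} (hd0 : d < 0) {p : Fin n → ℝ} (hp : ∀ i, 0 < p i)
    {l l' : Fin n → ℕ} (h : ∀ i, l' i ≤ l i) : Fv n d p l ≤ Fv n d p l' := by
  apply Finset.sum_le_sum
  intro i _
  exact mul_le_mul_of_nonneg_left (X_anti hd0 (h i)) (Real.rpow_pos_of_pos (hp i) _).le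

lemma sum_update {n : ℕ} {β : Type*} [AddCommMonoid β] (l : Fin n → ℕ) (j : Fin n) (v : ℕ)
    (f : Fin n → ℕ → β) :
    ∑ i, f i (Function.update l j v i) = f j v + ∑ i ∈ Finset.univ.erase j, f i (l i) := by
  rw [← Finset.add_sum_erase _ _ (Finset.mem_univ j)]
  congr 1
  · rw [Function.update_self]
  · exact Finset.sum_congr rfl fun i hi =>
      congrArg _ (Function.update_of_ne (Finset.mem_erase.mp hi).1 _ _)

/-- decrement step : if kraft < 1 we can decrement the max coordinate, keeping a code,
not decreasing Fv (strictly increasing). -/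
lemma decrement {n : ℕ} (hn : 2 ≤ n) {d : ℝ} (hd0 : d < 0) {p : Fin n → ℝ}
    (hp : ∀ i, 0 < p i) {l : Fin n → ℕ} (hcode : IsCode n l)
    (hlt : ∑ i, (2 : ℝ) ^ (-(l i : ℝ)) < 1) :
    ∃ l', IsCode n l' ∧ Fv n d p l < Fv n d p l' ∧ (∑ i, l' i) + 1 = ∑ i, l i ∧
      (∀ i, l' i ≤ l i) := by
  obtain ⟨j, hjmax, hslack⟩ := kraft_lt_one_slack n l (by omega) hlt
  have hj2 : 2 ≤ l j := by
    by_contra hj1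
    have hj1' : l j = 1 := by have := hcode.1 j; omega
    have hall : ∀ i, l i = 1 := fun i => by have := hcode.1 i; have := hjmax i; omega
    have : ∑ i, (2 : ℝ) ^ (-(l i : ℝ)) = n * (2:ℝ)^(-(1:ℕ):ℝ) := by
      rw [Finset.sum_congr rfl fun i _ => by rw [hall i]]
      simp [Finset.sum_const, Finset.card_univ]
    rw [this] at hlt
    have h12 : (2:ℝ)^(-((1:ℕ)):ℝ) = 1/2 := by
      rw [Real.rpow_neg (by norm_num), Real.rpow_natCast]; norm_num
    rw [h12] at hlt
    have : (2:ℝ) ≤ (n:ℝ) := by exact_mod_cast hn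
    linarith
  refine ⟨Function.update l j (l j - 1), ⟨?_, ?_⟩, ?_, ?_, ?_⟩
  · intro i
    rcases eq_or_ne i j with rfl | hne
    · rw [Function.update_self]; omega
    · rw [Function.update_of_ne hne]; exact hcode.1 i
  · rw [sum_update l j (l j - 1) (fun _ k => (2:ℝ)^(-(k:ℝ)))]
    have hsplit : (2:ℝ)^(-((l j - 1 : ℕ)):ℝ) = (2:ℝ)^(-(l j:ℝ)) + (2:ℝ)^(-(l j:ℝ)) := by
      have h := half_split (l j - 1)
      have : l j - 1 + 1 = l j := by omega
      rw [this] at h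
      linarith
    have hrest : ∑ i ∈ Finset.univ.erase j, (2:ℝ)^(-(l i:ℝ)) =
        (∑ i, (2:ℝ)^(-(l i:ℝ))) - (2:ℝ)^(-(l j:ℝ)) := by
      rw [← Finset.add_sum_erase _ _ (Finset.mem_univ j)]; ring
    rw [hsplit, hrest]
    linarith
  · simp only [Fv]
    rw [sum_update l j (l j - 1) (fun i k => (p i)^(1+d) * (2:ℝ)^(d * (k:ℝ)))]
    rw [← Finset.add_sum_erase _ _ (Finset.mem_univ j)]
    have hX : (2:ℝ)^(d * ((l j : ℕ):ℝ)) < (2:ℝ)^(d * ((l j - 1 : ℕ):ℝ)) := by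
      apply Real.rpow_lt_rpow_of_exponent_lt (by norm_num)
      have h1 : ((l j - 1 : ℕ):ℝ) < (l j : ℝ) := by
        have : (l j - 1) < l j := by omega
        exact_mod_cast this
      nlinarith
    have := Real.rpow_pos_of_pos (hp j) (1 + d)
    nlinarith
  · rw [sum_update l j (l j - 1) (fun _ k => k), ← Finset.add_sum_erase _ _ (Finset.mem_univ j)]
    omega
  · intro i
    rcases eq_or_ne i j with rfl | hne
    · rw [Function.update_self]; omega
    · rw [Function.update_of_ne hne]

/-- attainment of the maximum of Fv over all codes -/
lemma exists_max {n : ℕ} (hn : 2 ≤ n) {d : ℝ} (hd0 : d < 0) {p : Fin n → ℝ}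
    (hp : ∀ i, 0 < p i) :
    ∃ lopt, IsCode n lopt ∧ ∀ l, IsCode n l → Fv n d p l ≤ Fv n d p lopt := by
  set A : Set (Fin n → ℕ) := {l | IsCode n l ∧ ∀ i, l i ≤ n} with hA
  have hAfin : A.Finite := by
    apply Set.Finite.subset (Set.Finite.pi (fun i : Fin n => Set.finite_Iic n))
    intro l hl
    simp only [Set.mem_pi, Set.mem_univ, Set.mem_Iic, forall_true_left]
    exact fun i => hl.2 i
  have hAne : A.Nonempty := by
    refine ⟨fun _ => n, ⟨⟨fun i => by show 1 ≤ n; omega, ?_⟩, fun i => le_refl n⟩⟩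
    have : ∑ i : Fin n, (2 : ℝ) ^ (-((n:ℕ) : ℝ)) = n * (2:ℝ)^(-(n:ℝ)) := by
      simp [Finset.sum_const, Finset.card_univ]
    rw [this]
    have h2n : (n:ℝ) ≤ (2:ℝ)^((n:ℕ):ℝ) := by
      rw [Real.rpow_natCast]
      exact_mod_cast (Nat.lt_two_pow_self (n := n)).le
    have hpos : (0:ℝ) < (2:ℝ)^((n:ℕ):ℝ) := Real.rpow_pos_of_pos (by norm_num) _
    rw [Real.rpow_neg (by norm_num)]
    rw [mul_inv_le_iff₀ hpos]  -- n * x⁻¹ ≤ 1 ↔ ...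
    linarith
  have hfinne : hAfin.toFinset.Nonempty := by
    rwa [Set.Finite.toFinset_nonempty]
  obtain ⟨lopt, hloptmem, hloptmax⟩ := Finset.exists_max_image hAfin.toFinset (Fv n d p) hfinne
  rw [Set.Finite.mem_toFinset] at hloptmem
  refine ⟨lopt, hloptmem.1, ?_⟩
  -- strong induction on total length
  suffices h : ∀ N l, IsCode n l → (∑ i, l i) = N → Fv n d p l ≤ Fv n d p lopt by
    intro l hl; exact h _ l hl rfl
  intro N
  induction N using Nat.strong_induction_on with
  | _ N ihN =>
    intro l hl hsum
    by_cases hble : ∀ i, l i ≤ n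
    · exact hloptmax l (by rw [Set.Finite.mem_toFinset]; exact ⟨hl, hble⟩)
    · push_neg at hble
      obtain ⟨i1, hi1⟩ := hble
      rcases lt_or_eq_of_le hl.2 with hlt | heq
      · obtain ⟨l', hl'code, hl'F, hl'sum, -⟩ := decrement hn hd0 hp hl hlt
        exact le_trans hl'F.le (ihN (∑ i, l' i) (by omega) l' hl'code rfl)
      · have := kraft_eq_one_bound n l (by omega) heq i1
        omega

/-- swapping to put the minimum length on the max-probability symbol -/
lemma swap_to_min {n : ℕ} (hn : 2 ≤ n) {d : ℝ} (hd : -1 < d) (hd0 : d < 0)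
    {p : Fin n → ℝ} (hp : ∀ i, 0 < p i) (i0 : Fin n) (hmaxp : ∀ i, p i ≤ p i0)
    (l : Fin n → ℕ) (hcode : IsCode n l) :
    ∃ l', IsCode n l' ∧ Fv n d p l ≤ Fv n d p l' ∧ (∀ i, l' i0 ≤ l' i) ∧ l' i0 ≤ l i0 := by
  obtain ⟨j, -, hjmin⟩ := Finset.exists_min_image Finset.univ l ⟨i0, Finset.mem_univ i0⟩
  have hjmin' : ∀ i, l j ≤ l i := fun i => hjmin i (Finset.mem_univ i)
  rcases eq_or_ne j i0 with rfl | hne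
  · exact ⟨l, hcode, le_refl _, hjmin', le_refl _⟩
  set σ := Equiv.swap i0 j with hσ
  set l' := fun i => l (σ i) with hl'
  have hl'i0 : l' i0 = l j := by simp [hl', hσ, Equiv.swap_apply_left]
  have hl'j : l' j = l i0 := by simp [hl', hσ, Equiv.swap_apply_right]
  have hl'other : ∀ i, i ≠ i0 → i ≠ j → l' i = l i := fun i h1 h2 => by
    simp [hl', hσ, Equiv.swap_apply_of_ne_of_ne h1 h2]
  refine ⟨l', ⟨fun i => hcode.1 (σ i), ?_⟩, ?_, ?_, ?_⟩
  · have : ∑ i, (2:ℝ)^(-(l' i : ℝ)) = ∑ i, (2:ℝ)^(-(l i : ℝ)) :=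
      Equiv.sum_comp σ (fun i => (2:ℝ)^(-(l i : ℝ)))
    rw [this]; exact hcode.2
  · -- Fv l ≤ Fv l'
    have hdiff : Fv n d p l' - Fv n d p l =
        ∑ i, ((p i)^(1+d) * (2:ℝ)^(d * (l' i:ℝ)) - (p i)^(1+d) * (2:ℝ)^(d * (l i:ℝ))) := by
      rw [Finset.sum_sub_distrib]; rfl
    have hvanish : ∑ i, ((p i)^(1+d) * (2:ℝ)^(d * (l' i:ℝ)) - (p i)^(1+d) * (2:ℝ)^(d * (l i:ℝ)))
        = ∑ i ∈ ({i0, j} : Finset (Fin n)),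
          ((p i)^(1+d) * (2:ℝ)^(d * (l' i:ℝ)) - (p i)^(1+d) * (2:ℝ)^(d * (l i:ℝ))) := by
      symm
      apply Finset.sum_subset (Finset.subset_univ _)
      intro x _ hx
      simp only [Finset.mem_insert, Finset.mem_singleton] at hx
      push_neg at hx
      rw [hl'other x hx.1 hx.2]
      ring
    have hpair : ∑ i ∈ ({i0, j} : Finset (Fin n)),
          ((p i)^(1+d) * (2:ℝ)^(d * (l' i:ℝ)) - (p i)^(1+d) * (2:ℝ)^(d * (l i:ℝ)))
        = ((p i0)^(1+d) - (p j)^(1+d)) * ((2:ℝ)^(d * (l j:ℝ)) - (2:ℝ)^(d * (l i0:ℝ))) := by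
      rw [Finset.sum_pair (Ne.symm hne), hl'i0, hl'j]
      ring
    have hc : (p j)^(1+d) ≤ (p i0)^(1+d) :=
      Real.rpow_le_rpow (hp j).le (hmaxp j) (by linarith)
    have hX : (2:ℝ)^(d * (l i0:ℝ)) ≤ (2:ℝ)^(d * (l j:ℝ)) := X_anti hd0 (hjmin' i0)
    nlinarith [mul_nonneg (sub_nonneg.mpr hc) (sub_nonneg.mpr hX)]
  · intro i
    rw [hl'i0]
    exact hjmin' (σ i)
  · rw [hl'i0]; exact hjmin' i0

lemma max_complete {n : ℕ} (hn : 2 ≤ n) {d : ℝ} (hd0 : d < 0) {p : Fin n → ℝ}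
    (hp : ∀ i, 0 < p i) {l : Fin n → ℕ} (hcode : IsCode n l)
    (hopt : ∀ l', IsCode n l' → Fv n d p l' ≤ Fv n d p l) :
    ∑ i, (2 : ℝ) ^ (-(l i : ℝ)) = 1 := by
  rcases lt_or_eq_of_le hcode.2 with hlt | heq
  · obtain ⟨l', hl'code, hl'F, -, -⟩ := decrement hn hd0 hp hcode hlt
    exact absurd (hopt l' hl'code) (not_le.mpr hl'F)
  · exact heq

lemma descent {n : ℕ} (hn : 2 ≤ n) {d : ℝ} (hd : -1 < d) (hd0 : d < 0)
    {p : Fin n → ℝ} (hp : ∀ i, 0 < p i) (hpsum : ∑ i, p i = 1)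
    (i0 : Fin n) (hp1 : (0.4:ℝ) ≤ p i0)
    (l : Fin n → ℕ) (hcode : IsCode n l) (hkraft : ∑ i, (2:ℝ)^(-(l i:ℝ)) = 1)
    (hmin : ∀ i, l i0 ≤ l i) (hm2 : 2 ≤ l i0) :
    ∃ l', IsCode n l' ∧ Fv n d p l ≤ Fv n d p l' ∧ l' i0 + 1 = l i0 := by
  classical
  set m := l i0 with hmdef
  set others := Finset.univ.erase i0 with hothers
  set t : Fin n → ℝ := fun i => (2:ℝ)^(-(l i:ℝ)) with ht
  have htpos : ∀ i, 0 < t i := fun i => Real.rpow_pos_of_pos (by norm_num) _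
  have hothers_t : ∑ i ∈ others, t i = 1 - t i0 := by
    have := Finset.add_sum_erase Finset.univ t (Finset.mem_univ i0)
    rw [hothers]
    rw [ht] at this ⊢
    rw [hkraft] at this
    linarith
  have hti0 : t i0 = (2:ℝ)^(-(m:ℝ)) := rfl
  have htm : (2:ℝ)^(-(m:ℝ)) ≤ 1/4 := by
    have h1 := rpow_neg_anti 2 m hm2
    have h2 : (2:ℝ)^(-((2:ℕ):ℝ)) = 1/4 := by
      rw [Real.rpow_neg (by norm_num), Real.rpow_natCast]; norm_num
    rw [h2] at h1; exact h1
  have htmpos : (0:ℝ) < (2:ℝ)^(-(m:ℝ)) := Real.rpow_pos_of_pos (by norm_num) _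
  -- global upper bound on lengths, for extraction
  set K := ∑ i, l i with hK
  have hKb : ∀ i, l i ≤ m + K := fun i => by
    have : l i ≤ K := Finset.single_le_sum (f := l) (fun i _ => Nat.zero_le _) (Finset.mem_univ i)
    omega
  have hlow : ∀ i ∈ others, m ≤ l i := fun i _ => hmin i
  -- extract three groups of mass 2^{-m}
  obtain ⟨G1, hG1sub, hG1⟩ := extract K m others l hlow (fun i _ => hKb i)
    (by rw [hothers_t, hti0]; linarith)
  have hsd1 : ∑ i ∈ others \ G1, t i = 1 - 2 * (2:ℝ)^(-(m:ℝ)) := by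
    rw [Finset.sum_sdiff_eq_sub hG1sub, hothers_t, hti0, hG1]; ring
  obtain ⟨G2, hG2sub, hG2⟩ := extract K m (others \ G1) l
    (fun i hi => hlow i (Finset.mem_sdiff.mp hi).1) (fun i _ => hKb i)
    (by rw [hsd1]; linarith)
  have hsd2 : ∑ i ∈ (others \ G1) \ G2, t i = 1 - 3 * (2:ℝ)^(-(m:ℝ)) := by
    rw [Finset.sum_sdiff_eq_sub hG2sub, hsd1, hG2]; ring
  obtain ⟨G3, hG3sub, hG3⟩ := extract K m ((others \ G1) \ G2) l
    (fun i hi => hlow i (Finset.mem_sdiff.mp (Finset.mem_sdiff.mp hi).1).1) (fun i _ => hKb i)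
    (by rw [hsd2]; linarith)
  -- subsets and disjointness
  have hG2o : G2 ⊆ others := hG2sub.trans (Finset.sdiff_subset)
  have hG3o : G3 ⊆ others := hG3sub.trans ((Finset.sdiff_subset).trans Finset.sdiff_subset)
  have hd12 : Disjoint G1 G2 := Finset.disjoint_left.mpr fun x h1 h2 =>
    (Finset.mem_sdiff.mp (hG2sub h2)).2 h1
  have hd13 : Disjoint G1 G3 := Finset.disjoint_left.mpr fun x h1 h3 =>
    (Finset.mem_sdiff.mp (Finset.mem_sdiff.mp (hG3sub h3)).1).2 h1
  have hd23 : Disjoint G2 G3 := Finset.disjoint_left.mpr fun x h2 h3 =>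
    (Finset.mem_sdiff.mp (hG3sub h3)).2 h2
  -- p masses
  have hPsum : ∑ i ∈ G1, p i + ∑ i ∈ G2, p i + ∑ i ∈ G3, p i ≤ 1 - p i0 := by
    have hsub : (G1 ∪ G2) ∪ G3 ⊆ others :=
      Finset.union_subset (Finset.union_subset hG1sub hG2o) hG3o
    have hdisj12 : Disjoint (G1 ∪ G2) G3 := Finset.disjoint_union_left.mpr ⟨hd13, hd23⟩
    have he : ∑ i ∈ (G1 ∪ G2) ∪ G3, p i = ∑ i ∈ G1, p i + ∑ i ∈ G2, p i + ∑ i ∈ G3, p i := by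
      rw [Finset.sum_union hdisj12, Finset.sum_union hd12]
    have hle : ∑ i ∈ (G1 ∪ G2) ∪ G3, p i ≤ ∑ i ∈ others, p i :=
      Finset.sum_le_sum_of_subset_of_nonneg hsub (fun i _ _ => (hp i).le)
    have hot : ∑ i ∈ others, p i = 1 - p i0 := by
      have := Finset.add_sum_erase Finset.univ p (Finset.mem_univ i0)
      rw [hpsum] at this
      rw [hothers]; linarith
    linarith [he ▸ hle]
  -- choose W = two groups with smallest p-mass
  have hWex : ∃ W, W ⊆ others ∧ (∑ i ∈ W, t i = (2:ℝ)^(-(m:ℝ)) + (2:ℝ)^(-(m:ℝ))) ∧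
      3 * (∑ i ∈ W, p i) ≤ 2 * (1 - p i0) := by
    set P1 := ∑ i ∈ G1, p i
    set P2 := ∑ i ∈ G2, p i
    set P3 := ∑ i ∈ G3, p i
    rcases le_total P1 P2 with h12 | h12
    · rcases le_total P2 P3 with h23 | h23
      · -- P3 largest : take G1 ∪ G2
        exact ⟨G1 ∪ G2, Finset.union_subset hG1sub hG2o,
          by rw [Finset.sum_union hd12, hG1, hG2], by rw [Finset.sum_union hd12]; linarith⟩
      · -- P2 largest : take G1 ∪ G3
        exact ⟨G1 ∪ G3, Finset.union_subset hG1sub hG3o,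
          by rw [Finset.sum_union hd13, hG1, hG3], by rw [Finset.sum_union hd13]; linarith⟩
    · rcases le_total P1 P3 with h13 | h13
      · -- P3 largest : take G1 ∪ G2
        exact ⟨G1 ∪ G2, Finset.union_subset hG1sub hG2o,
          by rw [Finset.sum_union hd12, hG1, hG2], by rw [Finset.sum_union hd12]; linarith⟩
      · -- P1 largest : take G2 ∪ G3
        exact ⟨G2 ∪ G3, Finset.union_subset hG2o hG3o,
          by rw [Finset.sum_union hd23, hG2, hG3], by rw [Finset.sum_union hd23]; linarith⟩
  obtain ⟨W, hWsub, hWt, hWp⟩ := hWex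
  -- the new code
  set l' : Fin n → ℕ := fun i => if i = i0 then m - 1 else if i ∈ W then l i + 1 else l i
    with hl'def
  have hl'i0 : l' i0 = m - 1 := by simp [hl'def]
  have hl'W : ∀ i ∈ W, l' i = l i + 1 := by
    intro i hi
    have hine : i ≠ i0 := (Finset.mem_erase.mp (hWsub hi)).1
    simp [hl'def, hine, hi]
  have hl'rest : ∀ i ∈ others \ W, l' i = l i := by
    intro i hi
    rw [Finset.mem_sdiff] at hi
    have hine : i ≠ i0 := (Finset.mem_erase.mp hi.1).1
    simp [hl'def, hine, hi.2]
  -- splitting lemma for sums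
  have hsplit : ∀ (g : Fin n → ℕ → ℝ), ∑ i, g i (l' i) =
      g i0 (m-1) + ((∑ i ∈ others \ W, g i (l i)) + ∑ i ∈ W, g i (l i + 1)) := by
    intro g
    rw [← Finset.add_sum_erase _ (fun i => g i (l' i)) (Finset.mem_univ i0)]
    congr 1
    · rw [hl'i0]
    · rw [← hothers, ← Finset.sum_sdiff hWsub]
      congr 1
      · exact Finset.sum_congr rfl fun i hi => by rw [hl'rest i hi]
      · exact Finset.sum_congr rfl fun i hi => by rw [hl'W i hi]
  have hsplitl : ∀ (g : Fin n → ℕ → ℝ), ∑ i, g i (l i) =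
      g i0 m + ((∑ i ∈ others \ W, g i (l i)) + ∑ i ∈ W, g i (l i)) := by
    intro g
    rw [← Finset.add_sum_erase _ (fun i => g i (l i)) (Finset.mem_univ i0)]
    congr 1
    rw [← hothers, ← Finset.sum_sdiff hWsub]
  -- half identities
  have hhalfm : (2:ℝ)^(-((m-1:ℕ):ℝ)) = (2:ℝ)^(-(m:ℝ)) + (2:ℝ)^(-(m:ℝ)) := by
    have h := half_split (m-1)
    have h2 : m - 1 + 1 = m := by omega
    rw [h2] at h
    linarith
  have hW_t' : ∑ i ∈ W, (2:ℝ)^(-((l i + 1:ℕ)):ℝ) = (2:ℝ)^(-(m:ℝ)) := by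
    have hterm : ∀ i ∈ W, (2:ℝ)^(-((l i + 1:ℕ)):ℝ) = (2:ℝ)^(-(l i:ℝ)) / 2 := by
      intro i _
      have := half_split (l i)
      linarith
    rw [Finset.sum_congr rfl hterm, ← Finset.sum_div]
    rw [ht] at hWt
    rw [hWt]
    ring
  have hWrest_t : ∑ i ∈ others \ W, t i = 1 - 3 * (2:ℝ)^(-(m:ℝ)) := by
    rw [Finset.sum_sdiff_eq_sub hWsub, hothers_t, hti0, hWt]; ring
  refine ⟨l', ⟨?_, ?_⟩, ?_, ?_⟩
  · -- lengths ≥ 1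
    intro i
    rcases eq_or_ne i i0 with rfl | hne
    · rw [hl'i0]; omega
    · by_cases hiW : i ∈ W
      · rw [hl'W i hiW]; omega
      · have : l' i = l i := by simp [hl'def, hne, hiW]
        rw [this]; exact hcode.1 i
  · -- Kraft
    have := hsplit (fun _ k => (2:ℝ)^(-(k:ℝ)))
    rw [this]
    rw [hhalfm, hW_t']
    have : ∑ i ∈ others \ W, (2:ℝ)^(-(l i:ℝ)) = 1 - 3 * (2:ℝ)^(-(m:ℝ)) := hWrest_t
    rw [this]
    ring_nf
    linarith
  · -- Fv l ≤ Fv l'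
    set x := (2:ℝ)^d with hxdef
    have hx0 : 0 < x := Real.rpow_pos_of_pos (by norm_num) _
    have hx1 : x < 1 := Real.rpow_lt_one_of_one_lt_of_neg (by norm_num) hd0
    have hXsucc : ∀ k:ℕ, (2:ℝ)^(d*((k+1:ℕ):ℝ)) = (2:ℝ)^(d*(k:ℝ)) * x := by
      intro k
      push_cast
      rw [show d * ((k:ℝ)+1) = d*(k:ℝ) + d by ring, Real.rpow_add (by norm_num)]
    have hFl' := hsplit (fun i k => (p i)^(1+d) * (2:ℝ)^(d * (k:ℝ)))
    have hFl := hsplitl (fun i k => (p i)^(1+d) * (2:ℝ)^(d * (k:ℝ)))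
    have hFv' : Fv n d p l' = (p i0)^(1+d) * (2:ℝ)^(d*((m-1:ℕ):ℝ)) +
        ((∑ i ∈ others \ W, (p i)^(1+d) * (2:ℝ)^(d*(l i:ℝ))) +
         ∑ i ∈ W, (p i)^(1+d) * (2:ℝ)^(d*((l i + 1:ℕ):ℝ))) := hFl'
    have hFv : Fv n d p l = (p i0)^(1+d) * (2:ℝ)^(d*(m:ℝ)) +
        ((∑ i ∈ others \ W, (p i)^(1+d) * (2:ℝ)^(d*(l i:ℝ))) +
         ∑ i ∈ W, (p i)^(1+d) * (2:ℝ)^(d*(l i:ℝ))) := hFl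
    set S := ∑ i ∈ W, (p i)^(1+d) * (2:ℝ)^(d*(l i:ℝ)) with hSdef
    set C0 := (p i0)^(1+d) * (2:ℝ)^(d*((m-1:ℕ):ℝ)) with hC0def
    have hWx : ∑ i ∈ W, (p i)^(1+d) * (2:ℝ)^(d*((l i + 1:ℕ):ℝ)) = S * x := by
      rw [hSdef, Finset.sum_mul]
      exact Finset.sum_congr rfl fun i _ => by rw [hXsucc (l i)]; ring
    have hXm : (2:ℝ)^(d*(m:ℝ)) = (2:ℝ)^(d*((m-1:ℕ):ℝ)) * x := by
      have h2 : m - 1 + 1 = m := by omega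
      rw [← h2, hXsucc (m-1), h2]
    -- the key inequality S ≤ C0
    have hkey : S ≤ C0 := by
      have htX : ∀ i : Fin n, (2:ℝ)^(d * (l i:ℝ)) = (t i)^(-d) := by
        intro i
        show (2:ℝ)^(d * (l i:ℝ)) = ((2:ℝ)^(-(l i:ℝ)))^(-d)
        rw [← Real.rpow_mul (by norm_num : (0:ℝ) ≤ 2)]
        congr 1
        ring
      have hS2 : S = ∑ i ∈ W, (p i)^(1+d) * (t i)^(-d) :=
        Finset.sum_congr rfl fun i _ => by rw [htX i]
      have hhold := holder W p t (fun i _ => hp i) (fun i _ => htpos i) (-d) (1+d)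
        (by linarith) (by linarith) (by ring)
      have hWt2 : ∑ i ∈ W, t i = (2:ℝ)^(-((m-1:ℕ):ℝ)) := by rw [hWt, hhalfm]
      have hTa : ((2:ℝ)^(-((m-1:ℕ):ℝ)))^(-d) = (2:ℝ)^(d*((m-1:ℕ):ℝ)) := by
        rw [← Real.rpow_mul (by norm_num : (0:ℝ) ≤ 2)]
        congr 1
        ring
      have hPW : ∑ i ∈ W, p i ≤ p i0 := by linarith
      have hPb : (∑ i ∈ W, p i)^(1+d) ≤ (p i0)^(1+d) :=
        Real.rpow_le_rpow (Finset.sum_nonneg fun i _ => (hp i).le) hPW (by linarith)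
      have hTpos : (0:ℝ) ≤ ((2:ℝ)^(-((m-1:ℕ):ℝ)))^(-d) :=
        (Real.rpow_pos_of_pos (Real.rpow_pos_of_pos (by norm_num) _) _).le
      calc S = ∑ i ∈ W, (p i)^(1+d) * (t i)^(-d) := hS2
        _ ≤ (∑ i ∈ W, p i)^(1+d) * (∑ i ∈ W, t i)^(-d) := hhold
        _ = (∑ i ∈ W, p i)^(1+d) * ((2:ℝ)^(-((m-1:ℕ):ℝ)))^(-d) := by rw [hWt2]
        _ ≤ (p i0)^(1+d) * ((2:ℝ)^(-((m-1:ℕ):ℝ)))^(-d) :=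
            mul_le_mul_of_nonneg_right hPb hTpos
        _ = C0 := by rw [hTa]
    rw [hFv', hFv, hWx, hXm]
    nlinarith [mul_nonneg (sub_nonneg.mpr hkey) (sub_nonneg.mpr hx1.le)]
  · rw [hl'i0]; omega

lemma exists_opt_one {n : ℕ} (hn : 2 ≤ n) {d : ℝ} (hd : -1 < d) (hd0 : d < 0)
    {p : Fin n → ℝ} (hp : ∀ i, 0 < p i) (hpsum : ∑ i, p i = 1)
    (i0 : Fin n) (hmaxp : ∀ i, p i ≤ p i0) (hp1 : (0.4:ℝ) ≤ p i0) :
    ∃ lopt, IsCode n lopt ∧ (∀ l, IsCode n l → Fv n d p l ≤ Fv n d p lopt) ∧ lopt i0 = 1 := by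
  obtain ⟨l0, hl0code, hl0max⟩ := exists_max hn hd0 hp
  obtain ⟨l1, hl1code, hl1F, hl1min, -⟩ := swap_to_min hn hd hd0 hp i0 hmaxp l0 hl0code
  have hl1max : ∀ l, IsCode n l → Fv n d p l ≤ Fv n d p l1 :=
    fun l hl => le_trans (hl0max l hl) hl1F
  suffices H : ∀ M (l : Fin n → ℕ), IsCode n l →
      (∀ l'', IsCode n l'' → Fv n d p l'' ≤ Fv n d p l) → (∀ i, l i0 ≤ l i) → l i0 = M →
      ∃ lopt, IsCode n lopt ∧ (∀ l', IsCode n l' → Fv n d p l' ≤ Fv n d p lopt) ∧ lopt i0 = 1 by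
    exact H (l1 i0) l1 hl1code hl1max hl1min rfl
  intro M
  induction M using Nat.strong_induction_on with
  | _ M ihM =>
    intro l hcode hmaxl hminl hM
    by_cases hM1 : M ≤ 1
    · have : l i0 = 1 := by have := hcode.1 i0; omega
      exact ⟨l, hcode, hmaxl, this⟩
    · have hm2 : 2 ≤ l i0 := by omega
      have hkraft := max_complete hn hd0 hp hcode hmaxl
      obtain ⟨l', hl'code, hl'F, hl'i0⟩ :=
        descent hn hd hd0 hp hpsum i0 hp1 l hcode hkraft hminl hm2
      have hl'max : ∀ l'', IsCode n l'' → Fv n d p l'' ≤ Fv n d p l' :=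
        fun l'' h => le_trans (hmaxl l'' h) hl'F
      obtain ⟨l2, hl2code, hl2F, hl2min, hl2le⟩ := swap_to_min hn hd hd0 hp i0 hmaxp l' hl'code
      have hl2max : ∀ l'', IsCode n l'' → Fv n d p l'' ≤ Fv n d p l2 :=
        fun l'' h => le_trans (hl'max l'' h) hl2F
      exact ihM (l2 i0) (by omega) l2 hl2code hl2max hl2min rfl

theorem stmt_13 (n : ℕ) (hn : 2 ≤ n) (d : ℝ) (hd : -1 < d) (hd0 : d < 0)
    (p : Fin n → ℝ) (hp : ∀ i, 0 < p i) (hpsum : ∑ i, p i = 1)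
    (hmax : ∀ i, p i ≤ p ⟨0, by omega⟩) (hp₁ : (0.4 : ℝ) ≤ p ⟨0, by omega⟩) :
    ∃ l : Fin n → ℕ, IsCode n l ∧
      expRedundancy n d p l = expRedundancyOpt n d p ∧ l ⟨0, by omega⟩ = 1 := by
  set i0 : Fin n := ⟨0, by omega⟩ with hi0
  obtain ⟨lopt, hloptcode, hloptmax, hlopt1⟩ :=
    exists_opt_one hn hd hd0 hp hpsum i0 hmax hp₁
  refine ⟨lopt, hloptcode, ?_, hlopt1⟩
  have hR : ∀ l : Fin n → ℕ, expRedundancy n d p l = (1/d) * Real.logb 2 (Fv n d p l) :=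
    fun l => rfl
  have hlb : ∀ r ∈ { r | ∃ l : Fin n → ℕ, IsCode n l ∧ r = expRedundancy n d p l },
      expRedundancy n d p lopt ≤ r := by
    rintro r ⟨l, hl, rfl⟩
    rw [hR, hR]
    have hlog : Real.logb 2 (Fv n d p l) ≤ Real.logb 2 (Fv n d p lopt) :=
      (Real.logb_le_logb (by norm_num) (Fv_pos (by omega) hp l)
        (Fv_pos (by omega) hp lopt)).mpr (hloptmax l hl)
    have h1d : (1:ℝ)/d ≤ 0 := (div_nonpos_iff.mpr (Or.inl ⟨by norm_num, hd0.le⟩))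
    exact mul_le_mul_of_nonpos_left hlog h1d
  have hmem : expRedundancy n d p lopt ∈
      { r | ∃ l : Fin n → ℕ, IsCode n l ∧ r = expRedundancy n d p l } :=
    ⟨lopt, hloptcode, rfl⟩
  rw [expRedundancyOpt]
  exact le_antisymm (le_csInf ⟨_, hmem⟩ hlb) (csInf_le ⟨_, hlb⟩ hmem)
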